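/- Let L : ℝ^D → ℝ and ℓ : ℝ^D → ℝ be twice continuously differentiable, and let θ : (−δ, δ) → ℝ^D be a function differentiable at 0 satisfying the stationarity condition ∇L(θ(ε)) + ε·∇ℓ(θ(ε)) = 0 for all ε ∈ (−δ, δ). Assume the Hessian H = ∇²L(θ(0)) is invertible. Then the derivative of the perturbed minimizer satisfies θ′(0) = −H⁻¹ ∇ℓ(θ(0)). -/

import Mathlib

open scoped RealInnerProductSpace

lemma gradient_differentiable {D : ℕ} (f : EuclideanSpace ℝ (Fin D) → ℝ)
    (hf : ContDiff ℝ 2 f) : Differentiable ℝ (gradient f) := by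
  have h1 : Differentiable ℝ (fderiv ℝ f) :=
    (hf.fderiv_right (m := 1) (by norm_num)).differentiable (by norm_num)
  have : gradient f = fun x =>
      (InnerProductSpace.toDual ℝ (EuclideanSpace ℝ (Fin D))).symm (fderiv ℝ f x) := rfl
  rw [this]
  exact (InnerProductSpace.toDual ℝ
    (EuclideanSpace ℝ (Fin D))).symm.toContinuousLinearEquiv.differentiable.comp h1

/-- Influence function lemma (Cook): if `θ(ε)` is a differentiable-at-`0` curve of stationary
points of `L + ε·ℓ`, i.e. `∇L(θ(ε)) + ε·∇ℓ(θ(ε)) = 0` near `0`, with `L, ℓ` twice continuously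
differentiable and the Hessian `H = ∇²L(θ(0))` invertible (with inverse `Hinv`), then
`θ′(0) = −H⁻¹ ∇ℓ(θ(0))`. -/
theorem influence_function {D : ℕ}
    (L ℓ : EuclideanSpace ℝ (Fin D) → ℝ)
    (hL : ContDiff ℝ 2 L) (hℓ : ContDiff ℝ 2 ℓ)
    (δ : ℝ) (hδ : 0 < δ)
    (θ : ℝ → EuclideanSpace ℝ (Fin D))
    (hθ : DifferentiableAt ℝ θ 0)
    (hstat : ∀ ε ∈ Set.Ioo (-δ) δ, gradient L (θ ε) + ε • gradient ℓ (θ ε) = 0)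
    (Hinv : EuclideanSpace ℝ (Fin D) →L[ℝ] EuclideanSpace ℝ (Fin D))
    (hHinv₁ : Hinv.comp (fderiv ℝ (gradient L) (θ 0)) = ContinuousLinearMap.id ℝ _)
    (hHinv₂ : (fderiv ℝ (gradient L) (θ 0)).comp Hinv = ContinuousLinearMap.id ℝ _) :
    deriv θ 0 = -Hinv (gradient ℓ (θ 0)) := by
  set H := fderiv ℝ (gradient L) (θ 0) with hH
  set d := deriv θ 0 with hd
  set g0 := gradient ℓ (θ 0) with hg0
  have hθ' : HasDerivAt θ d 0 := hθ.hasDerivAt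
  -- derivative of gradient L ∘ θ
  have hgL : HasDerivAt (fun ε => gradient L (θ ε)) (H d) 0 :=
    ((gradient_differentiable L hL (θ 0)).hasFDerivAt).comp_hasDerivAt 0 hθ'
  -- derivative of gradient ℓ ∘ θ
  have hgℓ : HasDerivAt (fun ε => gradient ℓ (θ ε))
      ((fderiv ℝ (gradient ℓ) (θ 0)) d) 0 :=
    ((gradient_differentiable ℓ hℓ (θ 0)).hasFDerivAt).comp_hasDerivAt 0 hθ'
  have hsmul : HasDerivAt (fun ε : ℝ => ε • gradient ℓ (θ ε))
      (id (0:ℝ) • (fderiv ℝ (gradient ℓ) (θ 0)) d + (1:ℝ) • gradient ℓ (θ 0)) 0 :=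
    (hasDerivAt_id (0 : ℝ)).smul hgℓ
  have hF : HasDerivAt (fun ε => gradient L (θ ε) + ε • gradient ℓ (θ ε))
      (H d + g0) 0 := by
    have := hgL.add hsmul
    exact this.congr_deriv (by simp [hg0])
  have heq : (fun ε => gradient L (θ ε) + ε • gradient ℓ (θ ε)) =ᶠ[nhds (0:ℝ)]
      (fun _ => (0 : EuclideanSpace ℝ (Fin D))) := by
    filter_upwards [Ioo_mem_nhds (by linarith : -δ < 0) hδ] with ε hε
    exact hstat ε hε
  have hF0 : HasDerivAt (fun _ : ℝ => (0 : EuclideanSpace ℝ (Fin D))) (H d + g0) 0 :=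
    hF.congr_of_eventuallyEq heq.symm
  have hzero : H d + g0 = 0 := by
    have := hF0.unique (hasDerivAt_const 0 0)
    simpa using this
  have hHd : H d = -g0 := by
    have := hzero
    rw [add_eq_zero_iff_eq_neg] at this
    exact this
  have : Hinv (H d) = Hinv (-g0) := by rw [hHd]
  have hid : Hinv (H d) = d := by
    have := congrArg (fun T => T d) hHinv₁
    simpa using this
  rw [hid] at this
  simpa using this
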